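/- arXiv:2508.10282 — 2 statements merged into one kernel-verified Lean document; each statement's English description precedes it below -/
import Mathlib

section
/- For every source class (p_θ)_{θ∈Θ} on 𝒳^ℓ, the minimax batch regret is bounded below by the conditional capacity: min over batch predictors p̂ of sup_{θ∈Θ} R(p̂,θ) ≥ sup over prior probability measures w on Θ of I_w(θ;Y|X^n). -/
open MeasureTheory Real Filter

/-- `q` is a probability mass function on the finite type `B`. -/
def IsPMF {B : Type*} [Fintype B] (q : B → ℝ) : Prop :=
  (∀ y, 0 ≤ q y) ∧ ∑ y, q y = 1

/-- Probability of a tuple of `n` i.i.d. batches: `p_θ(x^n) = ∏ i, p_θ(x_i)`. -/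
def prodP {Θ B : Type*} (p : Θ → B → ℝ) (n : ℕ) (θ : Θ) (x : Fin n → B) : ℝ :=
  ∏ i, p θ (x i)

/-- The batch regret `R(p̂,θ) = Σ_{x^n} p_θ(x^n) Σ_y p_θ(y) log (p_θ(y) / p̂(y|x^n))`. -/
noncomputable def batchRegret {Θ B : Type*} [Fintype B] (p : Θ → B → ℝ) (n : ℕ)
    (phat : (Fin n → B) → B → ℝ) (θ : Θ) : ℝ :=
  ∑ x : Fin n → B, prodP p n θ x * ∑ y : B, p θ y * Real.log (p θ y / phat x y)

/-- The conditional mixture predictor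
`p̂_w(y|x^n) = ∫ p_θ(y) w(dθ|x^n) = (∫ p_θ(x^n) p_θ(y) w(dθ)) / (∫ p_θ(x^n) w(dθ))`. -/
noncomputable def mixPred {Θ B : Type*} [MeasurableSpace Θ] [Fintype B]
    (p : Θ → B → ℝ) (n : ℕ) (w : Measure Θ) (x : Fin n → B) (y : B) : ℝ :=
  (∫ θ, prodP p n θ x * p θ y ∂w) / (∫ θ, prodP p n θ x ∂w)

/-- The conditional mutual information
`I_w(θ;Y|X^n) = E[log (p_θ(Y) / p_w(Y|X^n))]`, the expectation being over the joint law
`w(dθ) p_θ(x^n) p_θ(y)`. -/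
noncomputable def condMI {Θ B : Type*} [MeasurableSpace Θ] [Fintype B]
    (p : Θ → B → ℝ) (n : ℕ) (w : Measure Θ) : ℝ :=
  ∫ θ, (∑ x : Fin n → B, prodP p n θ x *
    ∑ y : B, p θ y * Real.log (p θ y / mixPred p n w x y)) ∂w

/-!
Averaged over the prior `w`, the regret of any predictor `p̂` exceeds that of the Bayes mixture
predictor `p_w(·|x^n)` by `∑_{x^n} p_w(x^n) · D(p_w(·|x^n) ‖ p̂(·|x^n))`, which is nonnegative by
Gibbs' inequality. Since `I_w(θ;Y|X^n)` is the average regret of the mixture predictor, it is at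
most the average regret of `p̂`, hence at most any bound on `θ ↦ R(p̂,θ)`.
-/

lemma sub_le_mul_log_div {a b : ℝ} (ha : 0 ≤ a) (hb : 0 < b) : a - b ≤ a * log (a / b) :=
  calc a - b = b * (a / b - 1) := by field_simp
    _ ≤ b * (a / b * log (a / b)) := by gcongr; exact self_sub_one_le_mul_log (by positivity)
    _ = a * log (a / b) := by field_simp

lemma abs_mul_log_div_le {x : ℝ} (c : ℝ) (h0 : 0 ≤ x) (h1 : x ≤ 1) :
    |x * log (x / c)| ≤ 1 + |log c| := by
  rcases eq_or_ne c 0 with rfl | hc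
  · simp
  rcases eq_or_ne x 0 with rfl | hx
  · simp only [zero_mul, abs_zero]
    positivity
  have hxlogx : |x * log x| ≤ 1 :=
    abs_le.mpr ⟨by linarith [self_sub_one_le_mul_log h0], by linarith [mul_log_nonpos h0 h1]⟩
  have hxlogc : |x * log c| ≤ |log c| := by
    rw [abs_mul]
    exact mul_le_of_le_one_left (abs_nonneg _) (abs_le.mpr ⟨by linarith, h1⟩)
  rw [log_div hx hc, mul_sub]
  exact (abs_sub _ _).trans (add_le_add hxlogx hxlogc)

namespace IsPMF

variable {B : Type*} [Fintype B] {q : B → ℝ}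

lemma le_one (hq : IsPMF q) (y : B) : q y ≤ 1 :=
  hq.2 ▸ Finset.single_le_sum (fun z _ => hq.1 z) (Finset.mem_univ y)

/-- Gibbs' inequality. -/
lemma sum_mul_log_div_nonneg {r : B → ℝ} (hq : IsPMF q) (hr : IsPMF r) (hr0 : ∀ y, 0 < r y) :
    0 ≤ ∑ y, q y * log (q y / r y) :=
  calc (0 : ℝ) = ∑ y, (q y - r y) := by rw [Finset.sum_sub_distrib, hq.2, hr.2, sub_self]
    _ ≤ ∑ y, q y * log (q y / r y) :=
      Finset.sum_le_sum fun y _ => sub_le_mul_log_div (hq.1 y) (hr0 y)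

end IsPMF

lemma prodP_nonneg {Θ B : Type*} {p : Θ → B → ℝ} [Fintype B] (hp : ∀ θ, IsPMF (p θ)) (n : ℕ)
    (θ : Θ) (x : Fin n → B) : 0 ≤ prodP p n θ x :=
  Finset.prod_nonneg fun i _ => (hp θ).1 (x i)

lemma prodP_le_one {Θ B : Type*} {p : Θ → B → ℝ} [Fintype B] (hp : ∀ θ, IsPMF (p θ)) (n : ℕ)
    (θ : Θ) (x : Fin n → B) : prodP p n θ x ≤ 1 :=
  Finset.prod_le_one (fun i _ => (hp θ).1 (x i)) fun i _ => (hp θ).le_one (x i)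

lemma measurable_prodP {Θ B : Type*} [MeasurableSpace Θ] {p : Θ → B → ℝ}
    (hmeas : ∀ y, Measurable fun θ => p θ y) (n : ℕ) (x : Fin n → B) :
    Measurable fun θ => prodP p n θ x :=
  Finset.measurable_prod _ fun i _ => hmeas (x i)

lemma batchRegret_eq_sum_sum {Θ B : Type*} [Fintype B] (p : Θ → B → ℝ) (n : ℕ)
    (c : (Fin n → B) → B → ℝ) (θ : Θ) :
    batchRegret p n c θ = ∑ x, ∑ y, prodP p n θ x * (p θ y * log (p θ y / c x y)) := by
  simp only [batchRegret, Finset.mul_sum]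

noncomputable def mixProb {Θ B : Type*} [MeasurableSpace Θ] (p : Θ → B → ℝ) (n : ℕ)
    (w : Measure Θ) (x : Fin n → B) : ℝ :=
  ∫ θ, prodP p n θ x ∂w

lemma mixProb_nonneg {Θ B : Type*} [MeasurableSpace Θ] [Fintype B] {p : Θ → B → ℝ}
    (hp : ∀ θ, IsPMF (p θ)) (n : ℕ) (w : Measure Θ)
    (x : Fin n → B) : 0 ≤ mixProb p n w x :=
  integral_nonneg fun θ => prodP_nonneg hp n θ x

section SourceClass

variable {Θ B : Type*} [MeasurableSpace Θ] [Fintype B] {p : Θ → B → ℝ} {n : ℕ}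
  {w : Measure Θ} [IsFiniteMeasure w]

lemma integrable_prodP_mul_mul_log_div (hp : ∀ θ, IsPMF (p θ))
    (hmeas : ∀ y, Measurable fun θ => p θ y) (x : Fin n → B) (y : B) (c : ℝ) :
    Integrable (fun θ => prodP p n θ x * (p θ y * log (p θ y / c))) w := by
  refine Integrable.of_bound (C := 1 + |log c|) ?_ (ae_of_all _ fun θ => ?_)
  · have := measurable_prodP hmeas n x
    have := hmeas y
    fun_prop
  · rw [norm_mul, Real.norm_eq_abs, abs_of_nonneg (prodP_nonneg hp n θ x)]
    exact mul_le_of_le_one_left (abs_nonneg _) (prodP_le_one hp n θ x) |>.trans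
      (abs_mul_log_div_le c ((hp θ).1 y) ((hp θ).le_one y))

lemma integrable_batchRegret (hp : ∀ θ, IsPMF (p θ)) (hmeas : ∀ y, Measurable fun θ => p θ y)
    (c : (Fin n → B) → B → ℝ) : Integrable (batchRegret p n c) w := by
  simp_rw [funext (batchRegret_eq_sum_sum p n c)]
  exact integrable_finsetSum _ fun x _ => integrable_finsetSum _ fun y _ =>
    integrable_prodP_mul_mul_log_div hp hmeas x y (c x y)

lemma integral_batchRegret (hp : ∀ θ, IsPMF (p θ)) (hmeas : ∀ y, Measurable fun θ => p θ y)
    (c : (Fin n → B) → B → ℝ) :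
    ∫ θ, batchRegret p n c θ ∂w =
      ∑ x, ∑ y, ∫ θ, prodP p n θ x * (p θ y * log (p θ y / c x y)) ∂w := by
  simp_rw [batchRegret_eq_sum_sum]
  rw [integral_finsetSum _ fun x _ => integrable_finsetSum _ fun y _ =>
    integrable_prodP_mul_mul_log_div hp hmeas x y (c x y)]
  exact Finset.sum_congr rfl fun x _ => integral_finsetSum _ fun y _ =>
    integrable_prodP_mul_mul_log_div hp hmeas x y (c x y)

lemma integrable_prodP (hp : ∀ θ, IsPMF (p θ)) (hmeas : ∀ y, Measurable fun θ => p θ y)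
    (x : Fin n → B) : Integrable (fun θ => prodP p n θ x) w :=
  Integrable.of_bound (C := 1) (measurable_prodP hmeas n x).aestronglyMeasurable
    (ae_of_all _ fun θ => by
      rw [Real.norm_eq_abs, abs_of_nonneg (prodP_nonneg hp n θ x)]
      exact prodP_le_one hp n θ x)

lemma integrable_prodP_mul (hp : ∀ θ, IsPMF (p θ)) (hmeas : ∀ y, Measurable fun θ => p θ y)
    (x : Fin n → B) (y : B) : Integrable (fun θ => prodP p n θ x * p θ y) w :=
  (integrable_prodP hp hmeas x).mul_of_top_left
    (memLp_top_of_bound (hmeas y).aestronglyMeasurable 1 (ae_of_all _ fun θ => by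
      rw [Real.norm_eq_abs, abs_of_nonneg ((hp θ).1 y)]
      exact (hp θ).le_one y))

lemma integral_prodP_mul_eq_mixProb_mul_mixPred (hp : ∀ θ, IsPMF (p θ))
    (hmeas : ∀ y, Measurable fun θ => p θ y) (x : Fin n → B) (y : B) :
    ∫ θ, prodP p n θ x * p θ y ∂w = mixProb p n w x * mixPred p n w x y := by
  rcases eq_or_ne (mixProb p n w x) 0 with h0 | h0
  · rw [h0, zero_mul]
    refine le_antisymm ?_
      (integral_nonneg fun θ => mul_nonneg (prodP_nonneg hp n θ x) ((hp θ).1 y))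
    calc ∫ θ, prodP p n θ x * p θ y ∂w ≤ ∫ θ, prodP p n θ x ∂w :=
          integral_mono (integrable_prodP_mul hp hmeas x y) (integrable_prodP hp hmeas x)
            fun θ => mul_le_of_le_one_right (prodP_nonneg hp n θ x) ((hp θ).le_one y)
      _ = 0 := h0
  · exact (mul_div_cancel₀ _ h0).symm

lemma isPMF_mixPred (hp : ∀ θ, IsPMF (p θ)) (hmeas : ∀ y, Measurable fun θ => p θ y)
    {x : Fin n → B} (hx : mixProb p n w x ≠ 0) : IsPMF (mixPred p n w x) := by
  refine ⟨fun y => div_nonneg (integral_nonneg fun θ =>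
    mul_nonneg (prodP_nonneg hp n θ x) ((hp θ).1 y)) (mixProb_nonneg hp n w x), ?_⟩
  simp only [mixPred]
  rw [← Finset.sum_div, ← integral_finsetSum _ fun y _ => integrable_prodP_mul hp hmeas x y]
  simp_rw [← Finset.mul_sum, (hp _).2, mul_one]
  exact div_self hx

lemma integral_prodP_mul_mul_log_div_eq_add (hp : ∀ θ, IsPMF (p θ))
    (hmeas : ∀ y, Measurable fun θ => p θ y) (x : Fin n → B) (y : B) {c : ℝ} (hc : c ≠ 0) :
    ∫ θ, prodP p n θ x * (p θ y * log (p θ y / c)) ∂w =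
      ∫ θ, prodP p n θ x * (p θ y * log (p θ y / mixPred p n w x y)) ∂w +
        mixProb p n w x * (mixPred p n w x y * log (mixPred p n w x y / c)) := by
  have hjoint := integral_prodP_mul_eq_mixProb_mul_mixPred (w := w) hp hmeas x y
  set m := mixPred p n w x y
  rcases eq_or_ne m 0 with hm | hm
  · have hnull : (fun θ => prodP p n θ x * p θ y) =ᵐ[w] 0 := by
      rw [← integral_eq_zero_iff_of_nonneg
        (fun θ => mul_nonneg (prodP_nonneg hp n θ x) ((hp θ).1 y))
        (integrable_prodP_mul hp hmeas x y), hjoint, hm, mul_zero]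
    simp only [hm, div_zero, log_zero, mul_zero, zero_mul, integral_zero, add_zero]
    refine integral_eq_zero_of_ae ?_
    filter_upwards [hnull] with θ hθ
    rw [← mul_assoc, hθ, Pi.zero_apply, zero_mul]
  have hsplit : ∀ θ, prodP p n θ x * (p θ y * log (p θ y / c)) =
      prodP p n θ x * (p θ y * log (p θ y / m)) + prodP p n θ x * p θ y * log (m / c) := by
    intro θ
    rcases eq_or_ne (p θ y) 0 with h | h
    · simp [h]
    · rw [log_div h hc, log_div h hm, log_div hm hc]
      ring
  simp_rw [hsplit]
  rw [integral_add (integrable_prodP_mul_mul_log_div hp hmeas x y m)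
    ((integrable_prodP_mul hp hmeas x y).mul_const _), integral_mul_const, hjoint, mul_assoc]

theorem integral_batchRegret_eq_add (hp : ∀ θ, IsPMF (p θ))
    (hmeas : ∀ y, Measurable fun θ => p θ y) {c : (Fin n → B) → B → ℝ} (hc : ∀ x y, c x y ≠ 0) :
    ∫ θ, batchRegret p n c θ ∂w = ∫ θ, batchRegret p n (mixPred p n w) θ ∂w +
      ∑ x, mixProb p n w x * ∑ y, mixPred p n w x y * log (mixPred p n w x y / c x y) := by
  simp_rw [integral_batchRegret hp hmeas,
    integral_prodP_mul_mul_log_div_eq_add hp hmeas _ _ (hc _ _), Finset.sum_add_distrib,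
    Finset.mul_sum]

theorem integral_batchRegret_mixPred_le (hp : ∀ θ, IsPMF (p θ))
    (hmeas : ∀ y, Measurable fun θ => p θ y) {c : (Fin n → B) → B → ℝ} (hc : ∀ x, IsPMF (c x))
    (hcpos : ∀ x y, 0 < c x y) :
    ∫ θ, batchRegret p n (mixPred p n w) θ ∂w ≤ ∫ θ, batchRegret p n c θ ∂w := by
  rw [integral_batchRegret_eq_add hp hmeas fun x y => (hcpos x y).ne']
  refine le_add_of_nonneg_right (Finset.sum_nonneg fun x _ => ?_)
  rcases eq_or_ne (mixProb p n w x) 0 with h0 | h0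
  · rw [h0, zero_mul]
  · exact mul_nonneg (mixProb_nonneg hp n w x)
      ((isPMF_mixPred hp hmeas h0).sum_mul_log_div_nonneg (hc x) (hcpos x))

end SourceClass

theorem minimax_regret_ge_capacity_general
    {𝒳 Θ : Type*} [Fintype 𝒳] [MeasurableSpace Θ]
    (ℓ n : ℕ)
    (p : Θ → (Fin ℓ → 𝒳) → ℝ)
    (hp : ∀ θ, IsPMF (p θ))
    (hmeas : ∀ z : Fin ℓ → 𝒳, Measurable fun θ => p θ z)
    (phat : (Fin n → Fin ℓ → 𝒳) → (Fin ℓ → 𝒳) → ℝ)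
    (hphat : ∀ x, IsPMF (phat x))
    (hpos : ∀ x y, 0 < phat x y)
    (w : Measure Θ) [IsProbabilityMeasure w]
    (C : ℝ) (hC : ∀ θ : Θ, batchRegret p n phat θ ≤ C) :
    condMI p n w ≤ C :=
  calc condMI p n w = ∫ θ, batchRegret p n (mixPred p n w) θ ∂w := rfl
    _ ≤ ∫ θ, batchRegret p n phat θ ∂w := integral_batchRegret_mixPred_le hp hmeas hphat hpos
    _ ≤ ∫ _, C ∂w := integral_mono (integrable_batchRegret hp hmeas phat) (integrable_const C) hC
    _ = C := by simp

/-- The minimax batch regret is bounded below by the conditional capacity: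
for every (everywhere positive) batch predictor `p̂` and every prior probability measure `w`
on `Θ`, `sup_{θ∈Θ} R(p̂,θ) ≥ I_w(θ;Y|X^n)` (stated via upper bounds: any upper bound `C` of
`θ ↦ R(p̂,θ)` satisfies `C ≥ I_w(θ;Y|X^n)`). -/
theorem minimax_regret_ge_capacity
    {𝒳 Θ : Type*} [Fintype 𝒳] [Nonempty 𝒳] [MeasurableSpace Θ]
    (ℓ n : ℕ) (hℓ : 0 < ℓ) (hn : 0 < n)
    (p : Θ → (Fin ℓ → 𝒳) → ℝ)
    (hp : ∀ θ, IsPMF (p θ))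
    (hmeas : ∀ z : Fin ℓ → 𝒳, Measurable fun θ => p θ z)
    (phat : (Fin n → Fin ℓ → 𝒳) → (Fin ℓ → 𝒳) → ℝ)
    (hphat : ∀ x, IsPMF (phat x))
    (hpos : ∀ x y, 0 < phat x y)
    (w : Measure Θ) [IsProbabilityMeasure w]
    (C : ℝ) (hC : ∀ θ : Θ, batchRegret p n phat θ ≤ C) :
    condMI p n w ≤ C :=
  minimax_regret_ge_capacity_general ℓ n p hp hmeas phat hphat hpos w C hC
end

section
/- Suppose a prior probability measure w* on Θ attains the supremum C = sup_w I_w(θ;Y|X^n) over prior probability measures w on Θ. Let p̂* be the conditional mixture predictor associated with w*, i.e. p̂*(y|x^n) = ∫_Θ p_θ(y) w*(dθ|x^n) with posterior w*(dθ|x^n) = w*(dθ) p_θ(x^n)/∫_Θ p_{θ'}(x^n) w*(dθ'). Then for every θ ∈ Θ, the batch regret satisfies R(p̂*,θ) ≤ C. -/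
open MeasureTheory Real Filter

lemma my_tlogt (t : ℝ) (h : 0 < t) (h1 : t ≤ 1) : t * |Real.log t| ≤ 1 := by
  have hl : Real.log t ≤ 0 := Real.log_nonpos h.le h1
  rw [abs_of_nonpos hl]
  have h2 := Real.log_le_sub_one_of_pos (inv_pos.mpr h)
  rw [Real.log_inv] at h2
  have h3 : t * (t⁻¹ - 1) = 1 - t := by field_simp
  nlinarith

lemma my_mul_log_abs_le (t m : ℝ) (h0 : 0 ≤ t) (h1 : t ≤ 1) :
    |t * Real.log (t / m)| ≤ 1 + |Real.log m| := by
  rcases eq_or_lt_of_le h0 with h | h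
  · rw [← h]; simp; positivity
  rcases eq_or_ne m 0 with hm | hm
  · rw [hm]; simp
  rw [Real.log_div h.ne' hm, mul_sub, abs_sub_comm]
  calc |t * Real.log m - t * Real.log t| ≤ |t * Real.log m| + |t * Real.log t| := abs_sub _ _
    _ = t * |Real.log m| + t * |Real.log t| := by rw [abs_mul, abs_mul, abs_of_nonneg h0]
    _ ≤ 1 * |Real.log m| + 1 := by
        have h4 : t * |Real.log m| ≤ 1 * |Real.log m| :=
          mul_le_mul_of_nonneg_right h1 (abs_nonneg _)
        nlinarith [my_tlogt t h h1]
    _ = 1 + |Real.log m| := by ring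


/-- If the prior `w*` attains the supremum `C = sup_w I_w(θ;Y|X^n)` over
prior probability measures, then the conditional mixture predictor `p̂*` associated with `w*`
satisfies `R(p̂*,θ) ≤ C` for every `θ ∈ Θ`. -/
theorem mixture_predictor_regret_le_capacity
    {𝒳 Θ : Type*} [Fintype 𝒳] [Nonempty 𝒳] [MeasurableSpace Θ]
    (ℓ n : ℕ) (hℓ : 0 < ℓ) (hn : 0 < n)
    (p : Θ → (Fin ℓ → 𝒳) → ℝ)
    (hp : ∀ θ, IsPMF (p θ))
    (hmeas : ∀ z : Fin ℓ → 𝒳, Measurable fun θ => p θ z)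
    (wstar : Measure Θ) [IsProbabilityMeasure wstar]
    (hopt : ∀ w : Measure Θ, IsProbabilityMeasure w →
      condMI (B := Fin ℓ → 𝒳) p n w ≤ condMI p n wstar) :
    ∀ θ : Θ, batchRegret p n (mixPred p n wstar) θ ≤ condMI p n wstar := by
  intro θ
  classical
  -- basic pmf facts
  have hp0 : ∀ θ' y, 0 ≤ p θ' y := fun θ' => (hp θ').1
  have hpsum : ∀ θ', ∑ y, p θ' y = 1 := fun θ' => (hp θ').2
  have hp1 : ∀ θ' y, p θ' y ≤ 1 := by
    intro θ' y
    calc p θ' y ≤ ∑ y, p θ' y :=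
          Finset.single_le_sum (fun i _ => hp0 θ' i) (Finset.mem_univ y)
      _ = 1 := hpsum θ'
  have hP0 : ∀ θ' x, 0 ≤ prodP p n θ' x := fun θ' x =>
    Finset.prod_nonneg (fun i _ => hp0 θ' _)
  have hP1 : ∀ θ' x, prodP p n θ' x ≤ 1 := fun θ' x =>
    Finset.prod_le_one (fun i _ => hp0 θ' _) (fun i _ => hp1 θ' _)
  have hPm : ∀ x, Measurable fun θ' => prodP p n θ' x := fun x =>
    Finset.measurable_prod _ (fun i _ => hmeas (x i))
  have hPQm : ∀ x y, Measurable fun θ' => prodP p n θ' x * p θ' y := fun x y =>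
    (hPm x).mul (hmeas y)
  have hPQ0 : ∀ x y θ', 0 ≤ prodP p n θ' x * p θ' y := fun x y θ' =>
    mul_nonneg (hP0 θ' x) (hp0 θ' y)
  have hPQ1 : ∀ x y θ', prodP p n θ' x * p θ' y ≤ 1 := fun x y θ' =>
    mul_le_one₀ (hP1 θ' x) (hp0 θ' y) (hp1 θ' y)
  -- bounded measurable functions are integrable
  have hbdd_int : ∀ (μ : Measure Θ), IsFiniteMeasure μ → ∀ (f : Θ → ℝ) (M : ℝ),
      Measurable f → (∀ a, |f a| ≤ M) → Integrable f μ := by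
    intro μ _ f M hf hb
    exact (integrable_const M).mono' hf.aestronglyMeasurable
      (ae_of_all _ (by simpa [Real.norm_eq_abs] using hb))
  set A : (Fin n → Fin ℓ → 𝒳) → (Fin ℓ → 𝒳) → ℝ :=
    fun x y => ∫ θ', prodP p n θ' x * p θ' y ∂wstar with hAdef
  set Bx : (Fin n → Fin ℓ → 𝒳) → ℝ := fun x => ∫ θ', prodP p n θ' x ∂wstar with hBdef
  have intPQ : ∀ x y, Integrable (fun θ' => prodP p n θ' x * p θ' y) wstar := by
    intro x y
    exact hbdd_int wstar inferInstance _ 1 (hPQm x y)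
      (fun a => by rw [abs_of_nonneg (hPQ0 x y a)]; exact hPQ1 x y a)
  have intP : ∀ x, Integrable (fun θ' => prodP p n θ' x) wstar := by
    intro x
    exact hbdd_int wstar inferInstance _ 1 (hPm x)
      (fun a => by rw [abs_of_nonneg (hP0 a x)]; exact hP1 a x)
  have hA0 : ∀ x y, 0 ≤ A x y := fun x y => integral_nonneg (fun θ' => hPQ0 x y θ')
  have hB0 : ∀ x, 0 ≤ Bx x := fun x => integral_nonneg (fun θ' => hP0 θ' x)
  have hAB : ∀ x y, A x y ≤ Bx x := by
    intro x y
    apply integral_mono (intPQ x y) (intP x)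
    intro θ'
    calc prodP p n θ' x * p θ' y ≤ prodP p n θ' x * 1 :=
          mul_le_mul_of_nonneg_left (hp1 θ' y) (hP0 θ' x)
      _ = prodP p n θ' x := mul_one _
  have sumA : ∀ x, ∑ y, A x y = Bx x := by
    intro x
    rw [hAdef, hBdef]
    rw [← integral_finset_sum _ (fun y _ => intPQ x y)]
    congr 1
    funext θ'
    rw [← Finset.mul_sum, hpsum, mul_one]
  -- mixture family
  set wl : ℝ → Measure Θ := fun lam =>
    (ENNReal.ofReal (1 - lam)) • wstar + (ENNReal.ofReal lam) • Measure.dirac θ with hwldef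
  have hprob : ∀ lam, 0 ≤ lam → lam ≤ 1 → IsProbabilityMeasure (wl lam) := by
    intro lam h0 h1
    constructor
    simp only [hwldef, Measure.add_apply, Measure.smul_apply, smul_eq_mul, measure_univ, mul_one]
    rw [← ENNReal.ofReal_add (by linarith) h0]
    norm_num
  have hint_wl : ∀ lam, 0 ≤ lam → lam ≤ 1 → ∀ (g : Θ → ℝ) (M : ℝ),
      Measurable g → (∀ a, |g a| ≤ M) →
      ∫ θ', g θ' ∂(wl lam) = (1 - lam) * (∫ θ', g θ' ∂wstar) + lam * g θ := by
    intro lam h0 h1 g M hg hb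
    rw [hwldef]
    rw [integral_add_measure ((hbdd_int wstar inferInstance g M hg hb).smul_measure
        ENNReal.ofReal_ne_top)
        ((hbdd_int (Measure.dirac θ) inferInstance g M hg hb).smul_measure ENNReal.ofReal_ne_top),
      integral_smul_measure, integral_smul_measure, integral_dirac' g θ hg.stronglyMeasurable,
      ENNReal.toReal_ofReal (by linarith : (0:ℝ) ≤ 1 - lam), ENNReal.toReal_ofReal h0]
    simp [smul_eq_mul]
  have hmix : ∀ lam, 0 ≤ lam → lam ≤ 1 → ∀ x y,
      mixPred p n (wl lam) x y =
        ((1 - lam) * A x y + lam * (prodP p n θ x * p θ y)) /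
        ((1 - lam) * Bx x + lam * prodP p n θ x) := by
    intro lam h0 h1 x y
    show (∫ θ', prodP p n θ' x * p θ' y ∂(wl lam)) / (∫ θ', prodP p n θ' x ∂(wl lam)) = _
    rw [hint_wl lam h0 h1 _ 1 (hPQm x y)
        (fun a => by rw [abs_of_nonneg (hPQ0 x y a)]; exact hPQ1 x y a),
      hint_wl lam h0 h1 _ 1 (hPm x)
        (fun a => by rw [abs_of_nonneg (hP0 a x)]; exact hP1 a x)]
  -- the integrand of condMI
  set F : Measure Θ → Θ → ℝ := fun w θ' =>
    ∑ x, prodP p n θ' x * ∑ y, p θ' y * Real.log (p θ' y / mixPred p n w x y) with hFdef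
  have hcond : ∀ w : Measure Θ, condMI p n w = ∫ θ', F w θ' ∂w := fun w => rfl
  have hFm : ∀ w, Measurable (F w) := by
    intro w
    apply Finset.measurable_sum
    intro x _
    apply (hPm x).mul
    apply Finset.measurable_sum
    intro y _
    exact (hmeas y).mul (Real.measurable_log.comp ((hmeas y).div_const _))
  have hFb : ∀ w θ', |F w θ'| ≤
      ∑ x : Fin n → Fin ℓ → 𝒳, ∑ y, (1 + |Real.log (mixPred p n w x y)|) := by
    intro w θ'
    refine (Finset.abs_sum_le_sum_abs _ _).trans (Finset.sum_le_sum fun x _ => ?_)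
    rw [abs_mul, abs_of_nonneg (hP0 θ' x)]
    calc prodP p n θ' x * |∑ y, p θ' y * Real.log (p θ' y / mixPred p n w x y)|
        ≤ 1 * |∑ y, p θ' y * Real.log (p θ' y / mixPred p n w x y)| :=
          mul_le_mul_of_nonneg_right (hP1 θ' x) (abs_nonneg _)
      _ = |∑ y, p θ' y * Real.log (p θ' y / mixPred p n w x y)| := one_mul _
      _ ≤ ∑ y, |p θ' y * Real.log (p θ' y / mixPred p n w x y)| := Finset.abs_sum_le_sum_abs _ _
      _ ≤ ∑ y, (1 + |Real.log (mixPred p n w x y)|) :=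
          Finset.sum_le_sum fun y _ => my_mul_log_abs_le _ _ (hp0 θ' y) (hp1 θ' y)
  -- splitting condMI over the mixture measure
  have hsplit : ∀ lam, 0 ≤ lam → lam ≤ 1 →
      condMI p n (wl lam) = (1 - lam) * (∫ θ', F (wl lam) θ' ∂wstar) + lam * F (wl lam) θ := by
    intro lam h0 h1
    rw [hcond]
    exact hint_wl lam h0 h1 (F (wl lam)) _ (hFm _) (hFb _)
  -- integrability of individual terms
  have hTi : ∀ (m : ℝ) x y,
      Integrable (fun θ' => prodP p n θ' x * (p θ' y * Real.log (p θ' y / m))) wstar := by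
    intro m x y
    apply hbdd_int wstar inferInstance _ (1 + |Real.log m|)
    · exact (hPm x).mul ((hmeas y).mul (Real.measurable_log.comp ((hmeas y).div_const _)))
    · intro a
      rw [abs_mul, abs_of_nonneg (hP0 a x)]
      calc prodP p n a x * |p a y * Real.log (p a y / m)|
          ≤ 1 * |p a y * Real.log (p a y / m)| :=
            mul_le_mul_of_nonneg_right (hP1 a x) (abs_nonneg _)
        _ = |p a y * Real.log (p a y / m)| := one_mul _
        _ ≤ 1 + |Real.log m| := my_mul_log_abs_le _ _ (hp0 a y) (hp1 a y)
  have hIntF : ∀ w : Measure Θ, ∫ θ', F w θ' ∂wstar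
      = ∑ x, ∑ y, ∫ θ', prodP p n θ' x *
          (p θ' y * Real.log (p θ' y / mixPred p n w x y)) ∂wstar := by
    intro w
    have e : (fun θ' => F w θ') = fun θ' => ∑ x, ∑ y, prodP p n θ' x *
        (p θ' y * Real.log (p θ' y / mixPred p n w x y)) := by
      funext θ'
      exact Finset.sum_congr rfl fun x _ => Finset.mul_sum _ _ _
    rw [e, integral_finset_sum _ (fun x _ => integrable_finset_sum _ (fun y _ => hTi _ x y))]
    exact Finset.sum_congr rfl fun x _ => integral_finset_sum _ (fun y _ => hTi _ x y)
  -- per-term difference of integrals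
  have hDterm : ∀ (m1 m2 : ℝ) x y, (A x y = 0 ∨ (0 < m1 ∧ 0 < m2)) →
      (∫ θ', prodP p n θ' x * (p θ' y * Real.log (p θ' y / m1)) ∂wstar)
      - (∫ θ', prodP p n θ' x * (p θ' y * Real.log (p θ' y / m2)) ∂wstar)
      = A x y * (Real.log m2 - Real.log m1) := by
    intro m1 m2 x y hcase
    rcases hcase with hA | ⟨hm1, hm2⟩
    · have hz : (fun θ' => prodP p n θ' x * p θ' y) =ᵐ[wstar] 0 :=
        (integral_eq_zero_iff_of_nonneg (fun θ' => hPQ0 x y θ') (intPQ x y)).mp hA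
      have e1 : ∀ m : ℝ,
          ∫ θ', prodP p n θ' x * (p θ' y * Real.log (p θ' y / m)) ∂wstar = 0 := by
        intro m
        rw [show (0:ℝ) = ∫ _θ', (0:ℝ) ∂wstar from (integral_zero Θ ℝ).symm]
        apply integral_congr_ae
        filter_upwards [hz] with θ' hθ'
        have h2 : prodP p n θ' x * p θ' y = 0 := hθ'
        rcases mul_eq_zero.mp h2 with h | h <;> simp [h]
      rw [e1, e1, hA, zero_mul, sub_zero]
    · rw [← integral_sub (hTi m1 x y) (hTi m2 x y)]
      have e : (fun θ' => prodP p n θ' x * (p θ' y * Real.log (p θ' y / m1))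
          - prodP p n θ' x * (p θ' y * Real.log (p θ' y / m2)))
          = fun θ' => (prodP p n θ' x * p θ' y) * (Real.log m2 - Real.log m1) := by
        funext θ'
        rcases eq_or_lt_of_le (hp0 θ' y) with hq | hq
        · rw [← hq]; ring
        · rw [Real.log_div hq.ne' hm1.ne', Real.log_div hq.ne' hm2.ne']; ring
      rw [e, integral_mul_const]
  have hmixstar : ∀ x y, mixPred p n wstar x y = A x y / Bx x := fun x y => rfl
  have hJ : ∀ lam, 0 ≤ lam → lam < 1 →
      condMI p n wstar ≤ ∫ θ', F (wl lam) θ' ∂wstar := by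
    intro lam h0 h1
    rw [hcond, hIntF (wl lam), hIntF wstar, ← sub_nonneg, ← Finset.sum_sub_distrib]
    apply Finset.sum_nonneg
    intro x _
    rw [← Finset.sum_sub_distrib]
    have hd : 0 < (1 - lam) * Bx x + lam * prodP p n θ x ∨ Bx x = 0 := by
      rcases eq_or_lt_of_le (hB0 x) with hB | hB
      · exact Or.inr hB.symm
      · exact Or.inl (by nlinarith [hP0 θ x])
    rcases hd with hd | hBz
    swap
    · -- Bx x = 0 : all A x y = 0, mixPred wstar = 0/0, and the lam-mixture integrals vanish too
      have hAz : ∀ y, A x y = 0 := fun y => le_antisymm ((hAB x y).trans hBz.le) (hA0 x y)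
      have e : ∀ (m1 m2 : ℝ) y, A x y = 0 →
          (∫ θ', prodP p n θ' x * (p θ' y * Real.log (p θ' y / m1)) ∂wstar)
          - (∫ θ', prodP p n θ' x * (p θ' y * Real.log (p θ' y / m2)) ∂wstar) = 0 := by
        intro m1 m2 y hA
        rw [hDterm m1 m2 x y (Or.inl hA), hA, zero_mul]
      apply Finset.sum_nonneg
      intro y _
      rw [e _ _ y (hAz y)]
    · -- positive denominator case
      have hrw : ∀ y : Fin ℓ → 𝒳,
          (∫ θ', prodP p n θ' x * (p θ' y * Real.log (p θ' y / mixPred p n (wl lam) x y)) ∂wstar)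
          - (∫ θ', prodP p n θ' x * (p θ' y * Real.log (p θ' y / mixPred p n wstar x y)) ∂wstar)
          = A x y * (Real.log (mixPred p n wstar x y) - Real.log (mixPred p n (wl lam) x y)) := by
        intro y
        apply hDterm _ _ x y
        rcases eq_or_lt_of_le (hA0 x y) with hA | hA
        · exact Or.inl hA.symm
        · right
          have hBpos : 0 < Bx x := lt_of_lt_of_le hA (hAB x y)
          constructor
          · rw [hmix lam h0 h1.le x y]
            apply div_pos _ hd
            have := mul_nonneg h0 (hPQ0 x y θ)
            nlinarith
          · rw [hmixstar x y]
            exact div_pos hA hBpos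
      rw [Finset.sum_congr rfl fun y _ => hrw y]
      -- now show  Σ_y A x y * (log m* - log mλ) ≥ 0
      have hBpos : 0 < Bx x ∨ ∀ y, A x y = 0 := by
        rcases eq_or_lt_of_le (hB0 x) with hB | hB
        · exact Or.inr (fun y => le_antisymm ((hAB x y).trans hB.symm.le) (hA0 x y))
        · exact Or.inl hB
      rcases hBpos with hBpos | hAz
      swap
      · apply Finset.sum_nonneg; intro y _; rw [hAz y, zero_mul]
      -- Σ_y mλ = 1
      have hsummix : ∑ y, mixPred p n (wl lam) x y = 1 := by
        rw [Finset.sum_congr rfl fun y _ => hmix lam h0 h1.le x y, ← Finset.sum_div]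
        rw [show ∑ y, ((1 - lam) * A x y + lam * (prodP p n θ x * p θ y))
            = (1 - lam) * Bx x + lam * prodP p n θ x from ?_]
        · exact div_self hd.ne'
        · rw [Finset.sum_add_distrib, ← Finset.mul_sum, sumA x, ← Finset.mul_sum,
            ← Finset.mul_sum, hpsum θ, mul_one]
      have hmixnn : ∀ y, 0 ≤ mixPred p n (wl lam) x y := by
        intro y
        rw [hmix lam h0 h1.le x y]
        apply div_nonneg _ hd.le
        have := mul_nonneg h0 (hPQ0 x y θ)
        nlinarith [hA0 x y]
      calc (0:ℝ) = ∑ y, (A x y - Bx x * mixPred p n (wl lam) x y) := by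
            rw [Finset.sum_sub_distrib, sumA x, ← Finset.mul_sum, hsummix, mul_one, sub_self]
        _ ≤ ∑ y, A x y * (Real.log (mixPred p n wstar x y)
              - Real.log (mixPred p n (wl lam) x y)) := by
            apply Finset.sum_le_sum
            intro y _
            rcases eq_or_lt_of_le (hA0 x y) with hA | hA
            · rw [← hA, zero_mul]
              have := mul_nonneg hBpos.le (hmixnn y)
              linarith
            · have hms : 0 < mixPred p n wstar x y := by
                rw [hmixstar x y]; exact div_pos hA hBpos
              have hml : 0 < mixPred p n (wl lam) x y := by
                rw [hmix lam h0 h1.le x y]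
                apply div_pos _ hd
                have := mul_nonneg h0 (hPQ0 x y θ)
                nlinarith
              have hlog := Real.log_le_sub_one_of_pos (div_pos hml hms)
              rw [Real.log_div hml.ne' hms.ne'] at hlog
              have hBm : A x y / mixPred p n wstar x y = Bx x := by
                rw [hmixstar x y]
                field_simp
              have e2 : A x y * (mixPred p n (wl lam) x y / mixPred p n wstar x y)
                  = Bx x * mixPred p n (wl lam) x y := by
                rw [div_eq_mul_inv, ← mul_assoc, mul_comm (A x y), mul_assoc,
                  ← div_eq_mul_inv]  -- messy; fallback below
                rw [mul_comm (mixPred p n (wl lam) x y), hBm, mul_comm]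
              nlinarith [hlog, hA, e2]
  -- step 4 : key inequality for lam ∈ (0,1)
  have hkey : ∀ lam, 0 < lam → lam < 1 → F (wl lam) θ ≤ condMI p n wstar := by
    intro lam h0 h1
    have h2 := hopt (wl lam) (hprob lam h0.le h1.le)
    rw [hsplit lam h0.le h1.le] at h2
    have h3 := hJ lam h0.le h1
    nlinarith [h2, h3]
  -- step 5 : take lam → 0⁺
  have hBR : batchRegret p n (mixPred p n wstar) θ
      = ∑ x, ∑ y, prodP p n θ x * (p θ y * Real.log (p θ y / mixPred p n wstar x y)) := by
    unfold batchRegret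
    exact Finset.sum_congr rfl fun x _ => Finset.mul_sum _ _ _
  set G : ℝ → ℝ := fun lam => ∑ x, ∑ y,
    (if A x y = 0 ∧ 0 < Bx x then 0 else
      prodP p n θ x * (p θ y * Real.log (p θ y / mixPred p n (wl lam) x y))) with hGdef
  have hGle : ∀ lam, 0 < lam → lam < 1 → G lam ≤ F (wl lam) θ := by
    intro lam h0 h1
    have eF : F (wl lam) θ = ∑ x, ∑ y, prodP p n θ x *
        (p θ y * Real.log (p θ y / mixPred p n (wl lam) x y)) :=
      Finset.sum_congr rfl fun x _ => Finset.mul_sum _ _ _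
    rw [eF, hGdef]
    apply Finset.sum_le_sum; intro x _
    apply Finset.sum_le_sum; intro y _
    split_ifs with hcond
    swap
    · exact le_refl _
    obtain ⟨hA, hB⟩ := hcond
    rcases eq_or_lt_of_le (hp0 θ y) with hq | hq
    · rw [← hq]; simp
    rcases eq_or_lt_of_le (hP0 θ x) with hc | hc
    · rw [← hc]; simp
    have hd : 0 < (1 - lam) * Bx x + lam * prodP p n θ x := by nlinarith
    apply mul_nonneg (hP0 θ x)
    apply mul_nonneg (hp0 θ y)
    apply Real.log_nonneg
    rw [hmix lam h0.le h1.le x y, hA, mul_zero, zero_add]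
    have hmlpos : 0 < lam * (prodP p n θ x * p θ y) / ((1 - lam) * Bx x + lam * prodP p n θ x) :=
      div_pos (by positivity) hd
    rw [one_le_div hmlpos]
    rw [div_le_iff₀ hd]
    nlinarith [mul_pos (mul_pos hq (show (0:ℝ) < 1 - lam by linarith)) hB]
  have hGtend : Tendsto G (nhdsWithin 0 (Set.Ioi 0))
      (nhds (batchRegret p n (mixPred p n wstar) θ)) := by
    rw [hBR, hGdef]
    apply tendsto_finset_sum; intro x _
    apply tendsto_finset_sum; intro y _
    by_cases hcond : A x y = 0 ∧ 0 < Bx x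
    · simp only [if_pos hcond]
      have e : prodP p n θ x * (p θ y * Real.log (p θ y / mixPred p n wstar x y)) = 0 := by
        rw [hmixstar x y, hcond.1, zero_div, div_zero, Real.log_zero, mul_zero, mul_zero]
      rw [e]; exact tendsto_const_nhds
    · simp only [if_neg hcond]
      rcases eq_or_lt_of_le (hp0 θ y) with hq | hq
      · have e : prodP p n θ x * (p θ y * Real.log (p θ y / mixPred p n wstar x y)) = 0 := by
          rw [← hq]; ring
        rw [e]
        exact Tendsto.congr (fun lam => by rw [← hq]; ring) tendsto_const_nhds
      rcases eq_or_lt_of_le (hP0 θ x) with hc | hc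
      · have e : prodP p n θ x * (p θ y * Real.log (p θ y / mixPred p n wstar x y)) = 0 := by
          rw [← hc]; ring
        rw [e]
        exact Tendsto.congr (fun lam => by rw [← hc]; ring) tendsto_const_nhds
      rcases eq_or_lt_of_le (hB0 x) with hB | hB
      · -- Bx x = 0
        have hA : A x y = 0 := le_antisymm ((hAB x y).trans hB.symm.le) (hA0 x y)
        have e : prodP p n θ x * (p θ y * Real.log (p θ y / mixPred p n wstar x y)) = 0 := by
          rw [hmixstar x y, hA, zero_div, div_zero, Real.log_zero, mul_zero, mul_zero]
        rw [e]
        apply Tendsto.congr' _ tendsto_const_nhds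
        filter_upwards [Ioo_mem_nhdsGT_of_mem
          (by constructor <;> norm_num : (0:ℝ) ∈ Set.Ico (0:ℝ) (1:ℝ))] with lam hlam
        symm
        rw [hmix lam hlam.1.le hlam.2.le x y, hA, ← hB, mul_zero, zero_add, zero_add,
          show lam * (prodP p n θ x * p θ y) = lam * prodP p n θ x * p θ y from by ring,
          mul_div_cancel_left₀ _ (ne_of_gt (mul_pos hlam.1 hc)),
          div_self hq.ne', Real.log_one, mul_zero, mul_zero]
      · -- Bx x > 0, hence A x y > 0
        have hA : 0 < A x y := lt_of_le_of_ne (hA0 x y) (fun h => hcond ⟨h.symm, hB⟩)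
        have hnum : Tendsto (fun lam : ℝ => (1 - lam) * A x y
            + lam * (prodP p n θ x * p θ y)) (nhdsWithin 0 (Set.Ioi 0)) (nhds (A x y)) := by
          have h2 : Tendsto (fun lam : ℝ => (1 - lam) * A x y
              + lam * (prodP p n θ x * p θ y)) (nhds 0)
              (nhds ((1 - 0) * A x y + 0 * (prodP p n θ x * p θ y))) :=
            ((tendsto_const_nhds.sub tendsto_id).mul tendsto_const_nhds).add
              (tendsto_id.mul tendsto_const_nhds)
          have h3 : (1 - (0:ℝ)) * A x y + 0 * (prodP p n θ x * p θ y) = A x y := by ring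
          rw [h3] at h2
          exact h2.mono_left nhdsWithin_le_nhds
        have hden : Tendsto (fun lam : ℝ => (1 - lam) * Bx x + lam * prodP p n θ x)
            (nhdsWithin 0 (Set.Ioi 0)) (nhds (Bx x)) := by
          have h2 : Tendsto (fun lam : ℝ => (1 - lam) * Bx x + lam * prodP p n θ x) (nhds 0)
              (nhds ((1 - 0) * Bx x + 0 * prodP p n θ x)) :=
            ((tendsto_const_nhds.sub tendsto_id).mul tendsto_const_nhds).add
              (tendsto_id.mul tendsto_const_nhds)
          have h3 : (1 - (0:ℝ)) * Bx x + 0 * prodP p n θ x = Bx x := by ring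
          rw [h3] at h2
          exact h2.mono_left nhdsWithin_le_nhds
        have hmtend : Tendsto (fun lam : ℝ => mixPred p n (wl lam) x y)
            (nhdsWithin 0 (Set.Ioi 0)) (nhds (A x y / Bx x)) := by
          apply Tendsto.congr' _ (hnum.div hden hB.ne')
          filter_upwards [Ioo_mem_nhdsGT_of_mem
            (by constructor <;> norm_num : (0:ℝ) ∈ Set.Ico (0:ℝ) (1:ℝ))] with lam hlam
          exact (hmix lam hlam.1.le hlam.2.le x y).symm
        have hmpos : 0 < A x y / Bx x := div_pos hA hB
        have hlogt : Tendsto (fun lam : ℝ => Real.log (p θ y / mixPred p n (wl lam) x y))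
            (nhdsWithin 0 (Set.Ioi 0)) (nhds (Real.log (p θ y / (A x y / Bx x)))) := by
          apply Tendsto.log
          · exact tendsto_const_nhds.div hmtend hmpos.ne'
          · exact (div_pos hq hmpos).ne'
        rw [hmixstar x y]
        exact ((hlogt.const_mul (p θ y)).const_mul (prodP p n θ x))
  have hfinal : ∀ᶠ lam in nhdsWithin 0 (Set.Ioi 0), G lam ≤ condMI p n wstar := by
    filter_upwards [Ioo_mem_nhdsGT_of_mem
      (by constructor <;> norm_num : (0:ℝ) ∈ Set.Ico (0:ℝ) (1:ℝ))] with lam hlam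
    exact (hGle lam hlam.1 hlam.2).trans (hkey lam hlam.1 hlam.2)
  exact le_of_tendsto hGtend hfinal
end
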